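/- Every graph with no K_4 minor has tree-width at most 2. -/

import Mathlib

open SimpleGraph

/-- A tree-decomposition of the graph `G` over the tree `τ` with bags `X`. -/
structure IsTreeDecomp {V : Type} {T : Type} (G : SimpleGraph V) (τ : SimpleGraph T)
    (X : T → Set V) : Prop where
  isTree : τ.IsTree
  coverV : ∀ v : V, ∃ t, v ∈ X t
  coverE : ∀ ⦃u v : V⦄, G.Adj u v → ∃ t, u ∈ X t ∧ v ∈ X t
  subtreeConn : ∀ v : V, (τ.induce {t | v ∈ X t}).Connected

/-- The graph `G` has tree-width at most `w`. -/
def TreewidthAtMost {V : Type} (G : SimpleGraph V) (w : ℤ) : Prop :=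
  ∃ (T : Type) (τ : SimpleGraph T) (X : T → Set V),
    IsTreeDecomp G τ X ∧ ∀ t, ((X t).ncard : ℤ) ≤ w + 1

/-- `H` is a minor of `G`: there is a family of nonempty, pairwise disjoint, connected
branch sets in `G`, one for each vertex of `H`, with edges of `H` realized by edges of `G`. -/
def IsMinorOf {W V : Type} (H : SimpleGraph W) (G : SimpleGraph V) : Prop :=
  ∃ f : W → Set V, (∀ w, (f w).Nonempty) ∧ (∀ w, (G.induce (f w)).Connected) ∧
    (Pairwise fun w₁ w₂ => Disjoint (f w₁) (f w₂)) ∧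
    ∀ ⦃w₁ w₂⦄, H.Adj w₁ w₂ → ∃ u ∈ f w₁, ∃ x ∈ f w₂, G.Adj u x

/-- `F⁺`: the graph obtained from `F` by adding a new apex vertex adjacent to all of `F`. -/
def addApex {α : Type} (F : SimpleGraph α) : SimpleGraph (Option α) :=
  SimpleGraph.fromRel (fun a b => (a = none ∧ b ≠ none) ∨
    ∃ x y, a = some x ∧ b = some y ∧ F.Adj x y)

/-- The neighbourhood `N_G(X)` of a vertex set `X`. -/
def nbhd {V : Type} (G : SimpleGraph V) (X : Set V) : Set V :=
  {v | v ∉ X ∧ ∃ u ∈ X, G.Adj u v}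

set_option linter.unusedSectionVars false

namespace Aux11

variable {V : Type}

lemma connected_induce_mono' {H G : SimpleGraph V} (h : H ≤ G) (s : Set V)
    (hs : (H.induce s).Connected) : (G.induce s).Connected := by
  refine hs.map ⟨id, fun {a b} hab => ?_⟩ Function.surjective_id
  exact (by simpa using h (by simpa using hab) : (G.induce s).Adj a b)

lemma connected_induce_image' {V' : Type} (G : SimpleGraph V) (f : V' ↪ V) (s : Set V')
    (hs : ((G.comap f).induce s).Connected) : (G.induce (f '' s)).Connected := by
  refine hs.map ⟨fun x => ⟨f x.1, ⟨x.1, x.2, rfl⟩⟩, fun {a b} hab => ?_⟩ ?_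
  · exact (by simpa using hab : G.Adj (f a.1) (f b.1))
  · rintro ⟨y, x, hx, rfl⟩; exact ⟨⟨x, hx⟩, rfl⟩

lemma minor_mono {W : Type} {K : SimpleGraph W} {H G : SimpleGraph V} (h : H ≤ G)
    (hm : IsMinorOf K H) : IsMinorOf K G := by
  obtain ⟨f, h1, h2, h3, h4⟩ := hm
  exact ⟨f, h1, fun w => connected_induce_mono' h _ (h2 w), h3,
    fun w₁ w₂ hw => by obtain ⟨u, hu, x, hx, hux⟩ := h4 hw; exact ⟨u, hu, x, hx, h hux⟩⟩

lemma minor_comap {W V' : Type} {K : SimpleGraph W} (G : SimpleGraph V) (f : V' ↪ V)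
    (hm : IsMinorOf K (G.comap f)) : IsMinorOf K G := by
  obtain ⟨B, h1, h2, h3, h4⟩ := hm
  refine ⟨fun w => f '' B w, fun w => (h1 w).image f,
    fun w => connected_induce_image' G f _ (h2 w),
    fun i j hij => (Set.disjoint_image_iff f.injective).mpr (h3 hij), ?_⟩
  intro i j hij
  obtain ⟨u, hu, x, hx, hux⟩ := h4 hij
  exact ⟨f u, ⟨u, hu, rfl⟩, f x, ⟨x, hx, rfl⟩, by simpa using hux⟩

lemma adj_of_walk_ne {A : SimpleGraph V} :
    ∀ {a b : V}, A.Walk a b → a ≠ b → ∃ c, A.Adj a c := by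
  intro a b w
  induction w with
  | nil => intro h; exact absurd rfl h
  | cons h p _ => intro _; exact ⟨_, h⟩

-- reach_of_walk / connected_induce_of from t1 (re-stated here for dev)
lemma reach_of_walk (A B : SimpleGraph V) (s t : Set V) (hst : s ⊆ t)
    (hedge : ∀ x y (hx : x ∈ s) (hy : y ∈ s), A.Adj x y →
      (B.induce t).Reachable ⟨x, hst hx⟩ ⟨y, hst hy⟩) :
    ∀ (a b : s) (_ : (A.induce s).Walk a b),
      (B.induce t).Reachable ⟨a.1, hst a.2⟩ ⟨b.1, hst b.2⟩ := by
  intro a b w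
  induction w with
  | nil => exact Reachable.refl _
  | @cons u w c h p ih =>
      exact (hedge u.1 w.1 u.2 w.2 (by simpa using h)).trans ih

lemma connected_induce_of (A B : SimpleGraph V) (s t : Set V) (hst : s ⊆ t)
    (hA : (A.induce s).Connected)
    (hedge : ∀ x y (hx : x ∈ s) (hy : y ∈ s), A.Adj x y →
      (B.induce t).Reachable ⟨x, hst hx⟩ ⟨y, hst hy⟩)
    (hcov : ∀ z (hz : z ∈ t), ∃ x, ∃ hx : x ∈ s, (B.induce t).Reachable ⟨z, hz⟩ ⟨x, hst hx⟩) :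
    (B.induce t).Connected := by
  obtain ⟨x0⟩ := hA.nonempty
  haveI : Nonempty t := ⟨⟨x0.1, hst x0.2⟩⟩
  refine ⟨fun z₁ z₂ => ?_⟩
  obtain ⟨x₁, hx₁, r₁⟩ := hcov z₁.1 z₁.2
  obtain ⟨x₂, hx₂, r₂⟩ := hcov z₂.1 z₂.2
  have r := reach_of_walk A B s t hst hedge ⟨x₁, hx₁⟩ ⟨x₂, hx₂⟩
    (hA.preconnected ⟨x₁, hx₁⟩ ⟨x₂, hx₂⟩).some
  exact (r₁.trans r).trans r₂.symm

lemma lift_minor (G H : SimpleGraph V) (p u : V) (hpu : G.Adj p u)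
    (hiso : ∀ y, ¬ H.Adj p y)
    (hH : ∀ x y, H.Adj x y → G.Adj x y ∨ (x = u ∧ G.Adj p y) ∨ (y = u ∧ G.Adj p x))
    (hm : IsMinorOf (completeGraph (Fin 4)) H) :
    IsMinorOf (completeGraph (Fin 4)) G := by
  classical
  obtain ⟨f, h1, h2, h3, h4⟩ := hm
  have hp : ∀ i, p ∉ f i := by
    intro i hpi
    obtain ⟨j, hj⟩ : ∃ j : Fin 4, i ≠ j := by
      by_cases h0 : i = 0
      · exact ⟨1, by simp [h0]⟩
      · exact ⟨0, h0⟩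
    obtain ⟨x, hx, y, hy, hxy⟩ := h4 (by simpa [completeGraph] using hj)
    by_cases hxp : x = p
    · exact hiso y (hxp ▸ hxy)
    · obtain ⟨c, hc⟩ := adj_of_walk_ne
        ((h2 i).preconnected ⟨p, hpi⟩ ⟨x, hx⟩).some
        (by intro h; exact hxp (congrArg Subtype.val h).symm)
      exact hiso c.1 (by simpa using hc)
  have hfg : ∀ i, f i ⊆ (if u ∈ f i then insert p (f i) else f i) := by
    intro i x hx
    split
    · exact Set.mem_insert_of_mem _ hx
    · exact hx
  refine ⟨fun i => if u ∈ f i then insert p (f i) else f i,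
    fun i => (h1 i).mono (hfg i), fun i => ?_, ?_, ?_⟩
  · show (G.induce (if u ∈ f i then insert p (f i) else f i)).Connected
    by_cases hu : u ∈ f i
    · rw [if_pos hu]
      refine connected_induce_of H G (f i) (insert p (f i)) (Set.subset_insert _ _)
        (h2 i) ?_ ?_
      · intro x y hx hy hxy
        rcases hH x y hxy with hG | ⟨rfl, hpy⟩ | ⟨rfl, hpx⟩
        · exact Adj.reachable (by simpa using hG)
        · have h₁ : (G.induce (insert p (f i))).Adj ⟨x, Set.mem_insert_of_mem _ hx⟩
            ⟨p, Set.mem_insert _ _⟩ := by simpa using hpu.symm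
          have h₂ : (G.induce (insert p (f i))).Adj ⟨p, Set.mem_insert _ _⟩
            ⟨y, Set.mem_insert_of_mem _ hy⟩ := by simpa using hpy
          exact (h₁.reachable).trans h₂.reachable
        · have h₁ : (G.induce (insert p (f i))).Adj ⟨x, Set.mem_insert_of_mem _ hx⟩
            ⟨p, Set.mem_insert _ _⟩ := by simpa using hpx.symm
          have h₂ : (G.induce (insert p (f i))).Adj ⟨p, Set.mem_insert _ _⟩
            ⟨y, Set.mem_insert_of_mem _ hy⟩ := by simpa using hpu
          exact (h₁.reachable).trans h₂.reachable
      · intro z hz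
        rcases Set.mem_insert_iff.mp hz with rfl | hz'
        · exact ⟨u, hu, Adj.reachable (by simpa using hpu)⟩
        · exact ⟨z, hz', Reachable.refl _⟩
    · rw [if_neg hu]
      refine (h2 i).map ⟨id, fun {a b} hab => ?_⟩ Function.surjective_id
      rcases hH a.1 b.1 (by simpa using hab) with hG | ⟨ha, _⟩ | ⟨hb, _⟩
      · exact (by simpa using hG : (G.induce (f i)).Adj a b)
      · exact absurd (ha ▸ a.2) hu
      · exact absurd (hb ▸ b.2) hu
  · intro i j hij
    rw [Set.disjoint_left]
    intro x hxi hxj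
    replace hxi : x ∈ (if u ∈ f i then insert p (f i) else f i) := hxi
    replace hxj : x ∈ (if u ∈ f j then insert p (f j) else f j) := hxj
    have key : ∀ k, x ∈ (if u ∈ f k then insert p (f k) else f k) →
        x ∈ f k ∨ (x = p ∧ u ∈ f k) := by
      intro k h
      split at h
      · rcases Set.mem_insert_iff.mp h with rfl | h'
        · exact Or.inr ⟨rfl, by assumption⟩
        · exact Or.inl h'
      · exact Or.inl h
    rcases key i hxi with h1' | ⟨rfl, hui⟩
    · rcases key j hxj with h2' | ⟨rfl, _⟩
      · exact Set.disjoint_left.mp (h3 hij) h1' h2'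
      · exact hp i h1'
    · rcases key j hxj with h2' | ⟨_, huj⟩
      · exact hp j h2'
      · exact Set.disjoint_left.mp (h3 hij) hui huj
  · intro i j hij
    obtain ⟨x, hx, y, hy, hxy⟩ := h4 hij
    rcases hH x y hxy with hG | ⟨rfl, hpy⟩ | ⟨rfl, hpx⟩
    · exact ⟨x, hfg i hx, y, hfg j hy, hG⟩
    · exact ⟨p, by simp [if_pos hx], y, hfg j hy, hpy⟩
    · exact ⟨x, hfg i hx, p, by simp [if_pos hy], hpx.symm⟩

lemma induce_singleton_connected (A : SimpleGraph V) (x : V) :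
    (A.induce ({x} : Set V)).Connected := by
  haveI : Nonempty ({x} : Set V) := ⟨⟨x, rfl⟩⟩
  refine ⟨fun a b => ?_⟩
  have : a = b := Subtype.ext (by
    have ha := a.2; have hb := b.2
    simp only [Set.mem_singleton_iff] at ha hb
    rw [ha, hb])
  exact this ▸ Reachable.refl _

lemma connected_induce_insert (B : SimpleGraph V) (s : Set V) (a b : V)
    (hb : b ∈ s) (hab : B.Adj a b) (hs : (B.induce s).Connected) :
    (B.induce (insert a s)).Connected := by
  refine connected_induce_of B B s (insert a s) (Set.subset_insert a s) hs ?_ ?_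
  · intro x y hx hy h
    exact Adj.reachable (by simpa using h)
  · intro z hz
    rcases Set.mem_insert_iff.mp hz with rfl | hz'
    · exact ⟨b, hb, Adj.reachable (by simpa using hab)⟩
    · exact ⟨z, hz', Reachable.refl _⟩

lemma connected_induce_map_some {T : Type} (τ : SimpleGraph T) (σ : SimpleGraph (Option T))
    (hσ : ∀ x y, τ.Adj x y → σ.Adj (some x) (some y)) (S : Set T)
    (hs : (τ.induce S).Connected) : (σ.induce (Option.some '' S)).Connected := by
  refine hs.map ⟨fun x => ⟨some x.1, ⟨x.1, x.2, rfl⟩⟩, fun {a b} hab => ?_⟩ ?_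
  · exact (hσ _ _ (by simpa using hab) :
      (σ.induce (Option.some '' S)).Adj ⟨some a.1, _⟩ ⟨some b.1, _⟩)
  · rintro ⟨y, x, hx, rfl⟩; exact ⟨⟨x, hx⟩, rfl⟩

end Aux11

namespace Aux11
variable {V : Type} [Fintype V]

/-- total degree measure -/
noncomputable def mu (G : SimpleGraph V) : ℕ := ∑ x : V, (G.neighborSet x).ncard

lemma deg_ge3 {G : SimpleGraph V}
    (hdeg : ∀ w, (G.neighborSet w).ncard = 0 ∨ 3 ≤ (G.neighborSet w).ncard)
    {x y : V} (h : G.Adj x y) : 3 ≤ (G.neighborSet x).ncard := by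
  rcases hdeg x with h0 | h3
  · rw [Set.ncard_eq_zero (Set.toFinite _)] at h0
    exact ((Set.notMem_empty y) (by rw [← h0]; exact h)).elim
  · exact h3

/-- merge `v` into `a` : remove `v`, give its neighbours to `a`. -/
def mergeG (G : SimpleGraph V) (v a : V) : SimpleGraph V where
  Adj x y := (G.Adj x y ∧ x ≠ v ∧ y ≠ v) ∨ (x = a ∧ G.Adj v y ∧ y ≠ a) ∨
    (y = a ∧ G.Adj v x ∧ x ≠ a)
  symm := by
    constructor; intro x y h
    rcases h with ⟨h1, h2, h3⟩ | ⟨h1, h2, h3⟩ | ⟨h1, h2, h3⟩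
    · exact Or.inl ⟨h1.symm, h3, h2⟩
    · exact Or.inr (Or.inr ⟨h1, h2, h3⟩)
    · exact Or.inr (Or.inl ⟨h1, h2, h3⟩)
  loopless := by
    constructor; intro x h
    rcases h with ⟨h1, _, _⟩ | ⟨h1, _, h3⟩ | ⟨h1, _, h3⟩
    · exact G.irrefl h1
    · exact h3 h1
    · exact h3 h1

lemma mergeG_adj {G : SimpleGraph V} {v a x y : V} :
    (mergeG G v a).Adj x y ↔ (G.Adj x y ∧ x ≠ v ∧ y ≠ v) ∨ (x = a ∧ G.Adj v y ∧ y ≠ a) ∨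
    (y = a ∧ G.Adj v x ∧ x ≠ a) := Iff.rfl

lemma mergeG_nbr_v {G : SimpleGraph V} {v a : V} (hva : G.Adj v a) :
    (mergeG G v a).neighborSet v = ∅ := by
  ext y
  simp only [mem_neighborSet, mergeG_adj, Set.mem_empty_iff_false, iff_false]
  rintro (⟨_, h2, _⟩ | ⟨h1, _, _⟩ | ⟨_, h2, _⟩)
  · exact h2 rfl
  · exact G.ne_of_adj hva h1
  · exact G.irrefl h2

lemma mergeG_nbr_a {G : SimpleGraph V} {v a : V} (hva : G.Adj v a) :
    (mergeG G v a).neighborSet a = (G.neighborSet a \ {v}) ∪ (G.neighborSet v \ {a}) := by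
  have hvne : a ≠ v := (G.ne_of_adj hva).symm
  ext y
  constructor
  · intro h
    rcases mergeG_adj.mp h with ⟨h1, _, h3⟩ | ⟨_, h2, h3⟩ | ⟨_, _, h3⟩
    · exact Or.inl ⟨h1, fun hh => h3 hh⟩
    · exact Or.inr ⟨h2, fun hh => h3 hh⟩
    · exact absurd rfl h3
  · intro h
    rcases h with ⟨h1, h2⟩ | ⟨h1, h2⟩
    · exact mergeG_adj.mpr (Or.inl ⟨h1, hvne, fun hh => h2 hh⟩)
    · exact mergeG_adj.mpr (Or.inr (Or.inl ⟨rfl, h1, fun hh => h2 hh⟩))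

lemma mergeG_nbr_adj {G : SimpleGraph V} {v a w : V} (hw : w ≠ v) (hwa : w ≠ a)
    (hvw : G.Adj v w) :
    (mergeG G v a).neighborSet w = insert a (G.neighborSet w \ {v}) := by
  ext y
  simp only [mem_neighborSet, mergeG_adj, Set.mem_insert_iff, Set.mem_diff,
    Set.mem_singleton_iff]
  constructor
  · rintro (⟨h1, _, h3⟩ | ⟨h1, _, _⟩ | ⟨h1, _, _⟩)
    · exact Or.inr ⟨h1, h3⟩
    · exact absurd h1 hwa
    · exact Or.inl h1
  · rintro (rfl | ⟨h1, h2⟩)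
    · exact Or.inr (Or.inr ⟨rfl, hvw, hwa⟩)
    · exact Or.inl ⟨h1, hw, h2⟩

lemma mergeG_nbr_nadj {G : SimpleGraph V} {v a w : V} (hw : w ≠ v) (hwa : w ≠ a)
    (hvw : ¬ G.Adj v w) :
    (mergeG G v a).neighborSet w = G.neighborSet w := by
  ext y
  simp only [mem_neighborSet, mergeG_adj]
  constructor
  · rintro (⟨h1, _, _⟩ | ⟨h1, _, _⟩ | ⟨_, h2, _⟩)
    · exact h1
    · exact absurd h1 hwa
    · exact absurd h2 hvw
  · intro h1
    have hyv : y ≠ v := by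
      intro h; apply hvw; rw [h] at h1; exact h1.symm
    exact Or.inl ⟨h1, hw, hyv⟩

lemma merge_step (G : SimpleGraph V)
    (hdeg : ∀ w, (G.neighborSet w).ncard = 0 ∨ 3 ≤ (G.neighborSet w).ncard)
    (v a b : V) (hva : G.Adj v a) (hvb : G.Adj v b) (hab : ¬ G.Adj a b) (hba : b ≠ a)
    (hsafe : ∀ w, G.Adj v w → G.Adj a w → 4 ≤ (G.neighborSet w).ncard)
    (IH : ∀ G'' : SimpleGraph V, mu G'' < mu G →
      (∀ w, (G''.neighborSet w).ncard = 0 ∨ 3 ≤ (G''.neighborSet w).ncard) →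
      (∃ x y, G''.Adj x y) → IsMinorOf (completeGraph (Fin 4)) G'') :
    IsMinorOf (completeGraph (Fin 4)) G := by
  classical
  have hav : a ≠ v := (G.ne_of_adj hva).symm
  set M := mergeG G v a with hM
  have hMv0 : (M.neighborSet v).ncard = 0 := by
    rw [hM, mergeG_nbr_v hva]; simp
  have hdegM : ∀ w, (M.neighborSet w).ncard = 0 ∨ 3 ≤ (M.neighborSet w).ncard := by
    intro w
    by_cases hwv : w = v
    · left; rw [hwv]; exact hMv0
    by_cases hwa : w = a
    · right
      subst hwa
      rw [hM, mergeG_nbr_a hva]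
      have hsub : insert b (G.neighborSet w \ {v}) ⊆
          (G.neighborSet w \ {v}) ∪ (G.neighborSet v \ {w}) := by
        intro z hz
        rcases Set.mem_insert_iff.mp hz with rfl | hz'
        · exact Or.inr ⟨hvb, hba⟩
        · exact Or.inl hz'
      have h1 : v ∈ G.neighborSet w := hva.symm
      have h2 : b ∉ G.neighborSet w \ {v} := fun h => hab h.1
      have h3 : 3 ≤ (G.neighborSet w).ncard := deg_ge3 hdeg hva.symm
      have d1 := Set.ncard_diff_singleton_add_one h1 (Set.toFinite _)
      calc 3 ≤ (insert b (G.neighborSet w \ {v})).ncard := by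
            rw [Set.ncard_insert_of_notMem h2 (Set.toFinite _)]
            omega
        _ ≤ _ := Set.ncard_le_ncard hsub (Set.toFinite _)
    by_cases hvw : G.Adj v w
    · right
      rw [hM, mergeG_nbr_adj hwv hwa hvw]
      have hvm : v ∈ G.neighborSet w := hvw.symm
      have d1 := Set.ncard_diff_singleton_add_one hvm (Set.toFinite _)
      by_cases haw : G.Adj a w
      · have h4 := hsafe w hvw haw
        have hmem : a ∈ G.neighborSet w \ {v} := ⟨haw.symm, hav⟩
        rw [Set.insert_eq_self.mpr hmem]
        omega
      · have hnm : a ∉ G.neighborSet w \ {v} := fun h => haw h.1.symm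
        rw [Set.ncard_insert_of_notMem hnm (Set.toFinite _)]
        have h3 : 3 ≤ (G.neighborSet w).ncard := deg_ge3 hdeg hvw.symm
        omega
    · rw [hM, mergeG_nbr_nadj hwv hwa hvw]
      exact hdeg w
  have hEM : ∃ x y, M.Adj x y := ⟨a, b, Or.inr (Or.inl ⟨rfl, hvb, hba⟩)⟩
  have hmu : mu M < mu G := by
    have hmemva : a ∈ Finset.univ.erase v := Finset.mem_erase.mpr ⟨hav, Finset.mem_univ a⟩
    have e1 : mu G = (G.neighborSet v).ncard + ((G.neighborSet a).ncard +
        ∑ w ∈ (Finset.univ.erase v).erase a, (G.neighborSet w).ncard) := by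
      rw [mu, ← Finset.add_sum_erase _ _ (Finset.mem_univ v),
        ← Finset.add_sum_erase _ _ hmemva]
    have e2 : mu M = (M.neighborSet v).ncard + ((M.neighborSet a).ncard +
        ∑ w ∈ (Finset.univ.erase v).erase a, (M.neighborSet w).ncard) := by
      rw [mu, ← Finset.add_sum_erase _ _ (Finset.mem_univ v),
        ← Finset.add_sum_erase _ _ hmemva]
    have hMa : (M.neighborSet a).ncard + 2 ≤
        (G.neighborSet a).ncard + (G.neighborSet v).ncard := by
      rw [hM, mergeG_nbr_a hva]
      have hu := Set.ncard_union_le (G.neighborSet a \ {v}) (G.neighborSet v \ {a})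
      have d1 := Set.ncard_diff_singleton_add_one
        (show v ∈ G.neighborSet a from hva.symm) (Set.toFinite _)
      have d2 := Set.ncard_diff_singleton_add_one
        (show a ∈ G.neighborSet v from hva) (Set.toFinite _)
      omega
    have hrest : ∀ w ∈ (Finset.univ.erase v).erase a,
        (M.neighborSet w).ncard ≤ (G.neighborSet w).ncard := by
      intro w hw
      have hwa : w ≠ a := (Finset.mem_erase.mp hw).1
      have hwv : w ≠ v := (Finset.mem_erase.mp (Finset.mem_erase.mp hw).2).1
      by_cases hvw : G.Adj v w
      · rw [hM, mergeG_nbr_adj hwv hwa hvw]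
        have d1 := Set.ncard_diff_singleton_add_one
          (show v ∈ G.neighborSet w from hvw.symm) (Set.toFinite _)
        have := Set.ncard_insert_le a (G.neighborSet w \ {v})
        omega
      · rw [hM, mergeG_nbr_nadj hwv hwa hvw]
    have hsum := Finset.sum_le_sum hrest
    have hdv := deg_ge3 hdeg hva
    omega
  refine lift_minor G M v a hva ?_ ?_ (IH M hmu hdegM hEM)
  · intro y hy
    rcases (mergeG_adj.mp hy) with ⟨_, h2, _⟩ | ⟨h1, _, _⟩ | ⟨_, h2, _⟩
    · exact h2 rfl
    · exact G.ne_of_adj hva h1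
    · exact G.irrefl h2
  · intro x y hxy
    rcases (mergeG_adj.mp hxy) with ⟨h1, _, _⟩ | ⟨h1, h2, _⟩ | ⟨h1, h2, _⟩
    · exact Or.inl h1
    · exact Or.inr (Or.inl ⟨h1, h2⟩)
    · exact Or.inr (Or.inr ⟨h1, h2⟩)

end Aux11

namespace Aux11
variable {V : Type} [Fintype V]

lemma K4_of_four (G : SimpleGraph V) (v a b c : V)
    (hva : G.Adj v a) (hvb : G.Adj v b) (hvc : G.Adj v c)
    (hab : G.Adj a b) (hac : G.Adj a c) (hbc : G.Adj b c) :
    IsMinorOf (completeGraph (Fin 4)) G := by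
  have n1 : v ≠ a := hva.ne
  have n2 : v ≠ b := hvb.ne
  have n3 : v ≠ c := hvc.ne
  have n4 : a ≠ b := hab.ne
  have n5 : a ≠ c := hac.ne
  have n6 : b ≠ c := hbc.ne
  have h1 : G.Adj a v := hva.symm
  have h2 : G.Adj b v := hvb.symm
  have h3 : G.Adj c v := hvc.symm
  have h4 : G.Adj b a := hab.symm
  have h5 : G.Adj c a := hac.symm
  have h6 : G.Adj c b := hbc.symm
  have m1 : a ≠ v := n1.symm
  have m2 : b ≠ v := n2.symm
  have m3 : c ≠ v := n3.symm
  have m4 : b ≠ a := n4.symm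
  have m5 : c ≠ a := n5.symm
  have m6 : c ≠ b := n6.symm
  set h : Fin 4 → V :=
    fun i => if i.val = 0 then v else if i.val = 1 then a else if i.val = 2 then b else c
    with hh
  have hadj : ∀ i j : Fin 4, i ≠ j → G.Adj (h i) (h j) := by
    intro i j hij
    fin_cases i <;> fin_cases j <;>
      first
      | exact absurd rfl hij
      | exact hva | exact hvb | exact hvc | exact hab | exact hac | exact hbc
      | exact h1 | exact h2 | exact h3 | exact h4 | exact h5 | exact h6
  have hne : ∀ i j : Fin 4, i ≠ j → h i ≠ h j := fun i j hij => (hadj i j hij).ne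
  refine ⟨fun i => {h i}, fun i => ⟨h i, rfl⟩,
    fun i => induce_singleton_connected G (h i), ?_, ?_⟩
  · intro i j hij
    exact Set.disjoint_singleton.mpr (hne i j hij)
  · intro i j hij
    exact ⟨h i, rfl, h j, rfl, hadj i j hij⟩

lemma hard_case (G : SimpleGraph V)
    (hdeg : ∀ w, (G.neighborSet w).ncard = 0 ∨ 3 ≤ (G.neighborSet w).ncard)
    (v a b c : V) (hN : G.neighborSet v = {a, b, c})
    (hab : a ≠ b) (hac : a ≠ c) (hbc : b ≠ c) (hnadj : ¬ G.Adj a b)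
    (IH : ∀ G'' : SimpleGraph V, mu G'' < mu G →
      (∀ w, (G''.neighborSet w).ncard = 0 ∨ 3 ≤ (G''.neighborSet w).ncard) →
      (∃ x y, G''.Adj x y) → IsMinorOf (completeGraph (Fin 4)) G'') :
    IsMinorOf (completeGraph (Fin 4)) G := by
  classical
  have hva : G.Adj v a := by
    have : a ∈ G.neighborSet v := by rw [hN]; exact Set.mem_insert _ _
    exact this
  have hvb : G.Adj v b := by
    have : b ∈ G.neighborSet v := by
      rw [hN]; exact Set.mem_insert_of_mem _ (Set.mem_insert _ _)
    exact this
  have hvc : G.Adj v c := by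
    have : c ∈ G.neighborSet v := by
      rw [hN]
      exact Set.mem_insert_of_mem _ (Set.mem_insert_of_mem _ rfl)
    exact this
  have hmemN : ∀ w, G.Adj v w → w = a ∨ w = b ∨ w = c := by
    intro w h
    have : w ∈ G.neighborSet v := h
    rw [hN] at this
    simpa using this
  by_cases hs1 : G.Adj c a ∧ (G.neighborSet c).ncard = 3
  case neg =>
    refine merge_step G hdeg v a b hva hvb hnadj hab.symm ?_ IH
    intro w hvw haw
    rcases hmemN w hvw with rfl | rfl | rfl
    · exact absurd haw G.irrefl
    · exact absurd haw hnadj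
    · have h3 : 3 ≤ (G.neighborSet w).ncard := deg_ge3 hdeg hvw.symm
      have hne3 : ¬((G.neighborSet w).ncard = 3) := fun h => hs1 ⟨haw.symm, h⟩
      omega
  case pos =>
  obtain ⟨hca, hc3⟩ := hs1
  by_cases hs2 : G.Adj c b
  case neg =>
    refine merge_step G hdeg v b a hvb hva (fun h => hnadj h.symm) hab ?_ IH
    intro w hvw hbw
    rcases hmemN w hvw with rfl | rfl | rfl
    · exact absurd hbw (fun h => hnadj h.symm)
    · exact absurd hbw G.irrefl
    · exact absurd hbw (fun h => hs2 h.symm)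
  case pos =>
  have hNc : G.neighborSet c = {v, a, b} := by
    have hsub : ({v, a, b} : Set V) ⊆ G.neighborSet c := by
      intro z hz
      simp only [Set.mem_insert_iff, Set.mem_singleton_iff] at hz
      rcases hz with hz | hz | hz <;> rw [hz]
      · exact hvc.symm
      · exact hca
      · exact hs2
    have hcard : ({v, a, b} : Set V).ncard = 3 := by
      rw [Set.ncard_insert_of_notMem (by simp [hva.ne, hvb.ne]) (Set.toFinite _),
        Set.ncard_pair hab]
    exact (Set.eq_of_subset_of_ncard_le hsub (by rw [hcard, hc3]) (Set.toFinite _)).symm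
  have hmemNc : ∀ w, G.Adj c w → w = v ∨ w = a ∨ w = b := by
    intro w h
    have : w ∈ G.neighborSet c := h
    rw [hNc] at this
    simpa using this
  by_cases ha3 : (G.neighborSet a).ncard = 3
  · -- merge a into its third neighbour x
    obtain ⟨x, hx, hxv, hxc⟩ : ∃ x, G.Adj a x ∧ x ≠ v ∧ x ≠ c := by
      by_contra hcon
      push_neg at hcon
      have hsub2 : G.neighborSet a ⊆ {v, c} := by
        intro z hz
        by_cases hzv : z = v
        · exact Or.inl hzv
        · exact Or.inr (hcon z hz hzv)
      have hle := Set.ncard_le_ncard hsub2 (Set.toFinite _)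
      have : ({v, c} : Set V).ncard ≤ 2 := by
        have := Set.ncard_insert_le v ({c} : Set V)
        simpa using this
      omega
    have hxa : x ≠ a := hx.ne'
    have hxb : x ≠ b := fun h => hnadj (h ▸ hx)
    have hnxv : ¬ G.Adj x v := by
      intro h
      rcases hmemN x h.symm with rfl | rfl | rfl
      · exact hxa rfl
      · exact hxb rfl
      · exact hxc rfl
    have hNa : G.neighborSet a = {v, c, x} := by
      have hsub : ({v, c, x} : Set V) ⊆ G.neighborSet a := by
        intro z hz
        simp only [Set.mem_insert_iff, Set.mem_singleton_iff] at hz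
        rcases hz with hz | hz | hz <;> rw [hz]
        · exact hva.symm
        · exact hca.symm
        · exact hx
      have hcard : ({v, c, x} : Set V).ncard = 3 := by
        rw [Set.ncard_insert_of_notMem (by simp [hvc.ne, Ne.symm hxv]) (Set.toFinite _),
          Set.ncard_pair (Ne.symm hxc)]
      exact (Set.eq_of_subset_of_ncard_le hsub (by rw [hcard, ha3]) (Set.toFinite _)).symm
    have hmemNa : ∀ w, G.Adj a w → w = v ∨ w = c ∨ w = x := by
      intro w h
      have : w ∈ G.neighborSet a := h
      rw [hNa] at this
      simpa using this
    refine merge_step G hdeg a x v hx hva.symm hnxv hxv.symm ?_ IH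
    intro w haw hxw
    rcases hmemNa w haw with rfl | rfl | rfl
    · exact absurd hxw hnxv
    · exfalso
      rcases hmemNc x (hxw.symm) with rfl | rfl | rfl
      · exact hxv rfl
      · exact hxa rfl
      · exact hxb rfl
    · exact absurd hxw G.irrefl
  · have ha4 : 4 ≤ (G.neighborSet a).ncard := by
      have := deg_ge3 hdeg hva.symm
      omega
    by_cases hb3 : (G.neighborSet b).ncard = 3
    · obtain ⟨y, hy, hyv, hyc⟩ : ∃ y, G.Adj b y ∧ y ≠ v ∧ y ≠ c := by
        by_contra hcon
        push_neg at hcon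
        have hsub2 : G.neighborSet b ⊆ {v, c} := by
          intro z hz
          by_cases hzv : z = v
          · exact Or.inl hzv
          · exact Or.inr (hcon z hz hzv)
        have hle := Set.ncard_le_ncard hsub2 (Set.toFinite _)
        have : ({v, c} : Set V).ncard ≤ 2 := by
          have := Set.ncard_insert_le v ({c} : Set V)
          simpa using this
        omega
      have hyb : y ≠ b := hy.ne'
      have hya : y ≠ a := fun h => hnadj (by rw [← h]; exact hy.symm)
      have hnyv : ¬ G.Adj y v := by
        intro h
        rcases hmemN y h.symm with rfl | rfl | rfl
        · exact hya rfl
        · exact hyb rfl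
        · exact hyc rfl
      have hNb : G.neighborSet b = {v, c, y} := by
        have hsub : ({v, c, y} : Set V) ⊆ G.neighborSet b := by
          intro z hz
          simp only [Set.mem_insert_iff, Set.mem_singleton_iff] at hz
          rcases hz with hz | hz | hz <;> rw [hz]
          · exact hvb.symm
          · exact hs2.symm
          · exact hy
        have hcard : ({v, c, y} : Set V).ncard = 3 := by
          rw [Set.ncard_insert_of_notMem (by simp [hvc.ne, Ne.symm hyv]) (Set.toFinite _),
            Set.ncard_pair (Ne.symm hyc)]
        exact (Set.eq_of_subset_of_ncard_le hsub (by rw [hcard, hb3]) (Set.toFinite _)).symm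
      have hmemNb : ∀ w, G.Adj b w → w = v ∨ w = c ∨ w = y := by
        intro w h
        have : w ∈ G.neighborSet b := h
        rw [hNb] at this
        simpa using this
      refine merge_step G hdeg b y v hy hvb.symm hnyv hyv.symm ?_ IH
      intro w hbw hyw
      rcases hmemNb w hbw with rfl | rfl | rfl
      · exact absurd hyw hnyv
      · exfalso
        rcases hmemNc y (hyw.symm) with rfl | rfl | rfl
        · exact hyv rfl
        · exact hya rfl
        · exact hyb rfl
      · exact absurd hyw G.irrefl
    · have hb4 : 4 ≤ (G.neighborSet b).ncard := by
        have := deg_ge3 hdeg hvb.symm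
        omega
      -- special step: delete v and c, add edge ab
      have hvna : v ≠ a := hva.ne
      have hvnb : v ≠ b := hvb.ne
      have hvnc : v ≠ c := hvc.ne
      have hcna : c ≠ a := hca.ne
      have hcnb : c ≠ b := hs2.ne
      set G2 : SimpleGraph V :=
        { Adj := fun p q => (G.Adj p q ∧ p ≠ v ∧ p ≠ c ∧ q ≠ v ∧ q ≠ c) ∨
            (p = a ∧ q = b) ∨ (p = b ∧ q = a)
          symm := by
            constructor; rintro p q (⟨h1, h2, h3, h4, h5⟩ | ⟨rfl, rfl⟩ | ⟨rfl, rfl⟩)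
            · exact Or.inl ⟨h1.symm, h4, h5, h2, h3⟩
            · exact Or.inr (Or.inr ⟨rfl, rfl⟩)
            · exact Or.inr (Or.inl ⟨rfl, rfl⟩)
          loopless := by
            constructor; rintro p (⟨h1, _, _, _, _⟩ | ⟨rfl, h2⟩ | ⟨rfl, h2⟩)
            · exact G.irrefl h1
            · exact hab h2
            · exact hab h2.symm } with hG2
      have hG2adj : ∀ p q, G2.Adj p q ↔ ((G.Adj p q ∧ p ≠ v ∧ p ≠ c ∧ q ≠ v ∧ q ≠ c) ∨
          (p = a ∧ q = b) ∨ (p = b ∧ q = a)) := fun p q => Iff.rfl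
      have hnAdjv : ∀ w, w ≠ a → w ≠ b → w ≠ c → ¬ G.Adj v w := by
        intro w h1 h2 h3 h
        rcases hmemN w h with rfl | rfl | rfl
        · exact h1 rfl
        · exact h2 rfl
        · exact h3 rfl
      have hnAdjc : ∀ w, w ≠ v → w ≠ a → w ≠ b → ¬ G.Adj c w := by
        intro w h1 h2 h3 h
        rcases hmemNc w h with rfl | rfl | rfl
        · exact h1 rfl
        · exact h2 rfl
        · exact h3 rfl
      have hN2v : G2.neighborSet v = ∅ := by
        ext q
        simp only [Set.mem_empty_iff_false, iff_false]
        intro h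
        rcases (hG2adj v q).mp h with ⟨_, h2, _⟩ | ⟨h1, _⟩ | ⟨h1, _⟩
        · exact h2 rfl
        · exact hvna h1
        · exact hvnb h1
      have hN2c : G2.neighborSet c = ∅ := by
        ext q
        simp only [Set.mem_empty_iff_false, iff_false]
        intro h
        rcases (hG2adj c q).mp h with ⟨_, _, h3, _⟩ | ⟨h1, _⟩ | ⟨h1, _⟩
        · exact h3 rfl
        · exact hcna h1
        · exact hcnb h1
      have hanv : a ≠ v := hvna.symm
      have hanc : a ≠ c := hcna.symm
      have hbnv : b ≠ v := hvnb.symm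
      have hbnc : b ≠ c := hcnb.symm
      have hN2a : G2.neighborSet a = insert b (G.neighborSet a \ {v, c}) := by
        ext q
        constructor
        · intro h
          rcases (hG2adj a q).mp h with ⟨h1, _, _, h4, h5⟩ | ⟨_, h1⟩ | ⟨h1, _⟩
          · exact Set.mem_insert_of_mem _ ⟨h1, by simp [h4, h5]⟩
          · exact h1 ▸ Set.mem_insert _ _
          · exact absurd h1 hab
        · intro h
          rcases Set.mem_insert_iff.mp h with rfl | ⟨h1, h2⟩
          · exact (hG2adj a q).mpr (Or.inr (Or.inl ⟨rfl, rfl⟩))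
          · simp only [Set.mem_insert_iff, Set.mem_singleton_iff, not_or] at h2
            exact (hG2adj a q).mpr (Or.inl ⟨h1, hanv, hanc, h2.1, h2.2⟩)
      have hN2b : G2.neighborSet b = insert a (G.neighborSet b \ {v, c}) := by
        ext q
        constructor
        · intro h
          rcases (hG2adj b q).mp h with ⟨h1, _, _, h4, h5⟩ | ⟨h1, _⟩ | ⟨_, h1⟩
          · exact Set.mem_insert_of_mem _ ⟨h1, by simp [h4, h5]⟩
          · exact absurd h1.symm hab
          · exact h1 ▸ Set.mem_insert _ _
        · intro h
          rcases Set.mem_insert_iff.mp h with rfl | ⟨h1, h2⟩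
          · exact (hG2adj b q).mpr (Or.inr (Or.inr ⟨rfl, rfl⟩))
          · simp only [Set.mem_insert_iff, Set.mem_singleton_iff, not_or] at h2
            exact (hG2adj b q).mpr (Or.inl ⟨h1, hbnv, hbnc, h2.1, h2.2⟩)
      have hN2w : ∀ w, w ≠ v → w ≠ c → w ≠ a → w ≠ b →
          G2.neighborSet w = G.neighborSet w := by
        intro w h1 h2 h3 h4
        ext q
        constructor
        · intro h
          rcases (hG2adj w q).mp h with ⟨hh, _⟩ | ⟨hh, _⟩ | ⟨hh, _⟩
          · exact hh
          · exact absurd hh h3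
          · exact absurd hh h4
        · intro h
          have hqv : q ≠ v := by
            rintro rfl
            exact hnAdjv w h3 h4 h2 h.symm
          have hqc : q ≠ c := by
            rintro rfl
            exact hnAdjc w h1 h3 h4 h.symm
          exact (hG2adj w q).mpr (Or.inl ⟨h, h1, h2, hqv, hqc⟩)
      -- degree computations at a and b
      have hbna : b ∉ G.neighborSet a \ ({v, c} : Set V) := fun h => hnadj h.1
      have hana : a ∉ G.neighborSet b \ ({v, c} : Set V) := fun h => hnadj h.1.symm
      have hdiffa : G.neighborSet a \ ({v, c} : Set V) =
          (G.neighborSet a \ {v}) \ {c} := by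
        rw [Set.insert_eq, ← Set.diff_diff]
      have hdiffb : G.neighborSet b \ ({v, c} : Set V) =
          (G.neighborSet b \ {v}) \ {c} := by
        rw [Set.insert_eq, ← Set.diff_diff]
      have hda : (G2.neighborSet a).ncard + 2 = (G.neighborSet a).ncard + 1 := by
        rw [hN2a, Set.ncard_insert_of_notMem hbna (Set.toFinite _), hdiffa]
        have d1 := Set.ncard_diff_singleton_add_one
          (show v ∈ G.neighborSet a from hva.symm) (Set.toFinite _)
        have d2 := Set.ncard_diff_singleton_add_one
          (show c ∈ G.neighborSet a \ {v} from ⟨hca.symm, by simp [hcnb, Ne.symm hvnc]⟩)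
          (Set.toFinite _)
        omega
      have hdb : (G2.neighborSet b).ncard + 2 = (G.neighborSet b).ncard + 1 := by
        rw [hN2b, Set.ncard_insert_of_notMem hana (Set.toFinite _), hdiffb]
        have d1 := Set.ncard_diff_singleton_add_one
          (show v ∈ G.neighborSet b from hvb.symm) (Set.toFinite _)
        have d2 := Set.ncard_diff_singleton_add_one
          (show c ∈ G.neighborSet b \ {v} from ⟨hs2.symm, by simp [Ne.symm hvnc]⟩)
          (Set.toFinite _)
        omega
      have hdeg2 : ∀ w, (G2.neighborSet w).ncard = 0 ∨ 3 ≤ (G2.neighborSet w).ncard := by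
        intro w
        by_cases h1 : w = v
        · left; rw [h1, hN2v]; simp
        by_cases h2 : w = c
        · left; rw [h2, hN2c]; simp
        by_cases h3 : w = a
        · right; rw [h3]; omega
        by_cases h4 : w = b
        · right; rw [h4]; omega
        · rw [hN2w w h1 h2 h3 h4]; exact hdeg w
      have hE2 : ∃ x y, G2.Adj x y := ⟨a, b, (hG2adj a b).mpr (Or.inr (Or.inl ⟨rfl, rfl⟩))⟩
      have hmu2 : mu G2 < mu G := by
        refine Finset.sum_lt_sum ?_ ⟨v, Finset.mem_univ v, ?_⟩
        · intro w _
          by_cases h1 : w = v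
          · rw [h1, hN2v]; simp
          by_cases h2 : w = c
          · rw [h2, hN2c]; simp
          by_cases h3 : w = a
          · rw [h3]; omega
          by_cases h4 : w = b
          · rw [h4]; omega
          · rw [hN2w w h1 h2 h3 h4]
        · rw [hN2v]
          have : 0 < (G.neighborSet v).ncard :=
            Set.ncard_pos (Set.toFinite _) |>.mpr ⟨a, hva⟩
          simpa using this
      refine lift_minor G G2 v a hva ?_ ?_ (IH G2 hmu2 hdeg2 hE2)
      · intro y hy
        rcases (hG2adj v y).mp hy with ⟨_, h2, _⟩ | ⟨h1, _⟩ | ⟨h1, _⟩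
        · exact h2 rfl
        · exact hvna h1
        · exact hvnb h1
      · intro x y hxy
        rcases (hG2adj x y).mp hxy with ⟨h1, _⟩ | ⟨rfl, rfl⟩ | ⟨rfl, rfl⟩
        · exact Or.inl h1
        · exact Or.inr (Or.inl ⟨rfl, hvb⟩)
        · exact Or.inr (Or.inr ⟨rfl, hvb⟩)

lemma lemA : ∀ (n : ℕ) (G : SimpleGraph V), mu G = n →
    (∀ w, (G.neighborSet w).ncard = 0 ∨ 3 ≤ (G.neighborSet w).ncard) →
    (∃ x y, G.Adj x y) → IsMinorOf (completeGraph (Fin 4)) G := by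
  intro n
  induction n using Nat.strong_induction_on with
  | _ n IH =>
  intro G hmu hdeg hE
  classical
  by_cases hc1 : ∃ x y, G.Adj x y ∧ 4 ≤ (G.neighborSet x).ncard ∧
      4 ≤ (G.neighborSet y).ncard
  · obtain ⟨x, y, hxy, h4x, h4y⟩ := hc1
    have hxny : x ≠ y := hxy.ne
    set Gd : SimpleGraph V :=
      { Adj := fun p q => G.Adj p q ∧ ¬(p = x ∧ q = y) ∧ ¬(p = y ∧ q = x)
        symm := by
          constructor; rintro p q ⟨h1, h2, h3⟩
          exact ⟨h1.symm, fun hh => h3 ⟨hh.2, hh.1⟩, fun hh => h2 ⟨hh.2, hh.1⟩⟩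
        loopless := ⟨fun p h => G.irrefl h.1⟩ } with hGd
    have hGdadj : ∀ p q, Gd.Adj p q ↔
        (G.Adj p q ∧ ¬(p = x ∧ q = y) ∧ ¬(p = y ∧ q = x)) := fun p q => Iff.rfl
    have hNx : Gd.neighborSet x = G.neighborSet x \ {y} := by
      ext q
      constructor
      · intro h
        obtain ⟨h1, h2, _⟩ := (hGdadj x q).mp h
        exact ⟨h1, fun hq => h2 ⟨rfl, hq⟩⟩
      · intro ⟨h1, h2⟩
        exact (hGdadj x q).mpr ⟨h1, fun hh => h2 hh.2, fun hh => hxny hh.1⟩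
    have hNy : Gd.neighborSet y = G.neighborSet y \ {x} := by
      ext q
      constructor
      · intro h
        obtain ⟨h1, _, h3⟩ := (hGdadj y q).mp h
        exact ⟨h1, fun hq => h3 ⟨rfl, hq⟩⟩
      · intro ⟨h1, h2⟩
        exact (hGdadj y q).mpr ⟨h1, fun hh => hxny hh.1.symm, fun hh => h2 hh.2⟩
    have hNw : ∀ w, w ≠ x → w ≠ y → Gd.neighborSet w = G.neighborSet w := by
      intro w hw1 hw2
      ext q
      constructor
      · intro h; exact ((hGdadj w q).mp h).1
      · intro h; exact (hGdadj w q).mpr ⟨h, fun hh => hw1 hh.1, fun hh => hw2 hh.1⟩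
    have dx := Set.ncard_diff_singleton_add_one
      (show y ∈ G.neighborSet x from hxy) (Set.toFinite _)
    have dy := Set.ncard_diff_singleton_add_one
      (show x ∈ G.neighborSet y from hxy.symm) (Set.toFinite _)
    have hdegd : ∀ w, (Gd.neighborSet w).ncard = 0 ∨ 3 ≤ (Gd.neighborSet w).ncard := by
      intro w
      by_cases h1 : w = x
      · right; rw [h1, hNx]; omega
      by_cases h2 : w = y
      · right; rw [h2, hNy]; omega
      · rw [hNw w h1 h2]; exact hdeg w
    have hEd : ∃ p q, Gd.Adj p q := by
      have h3 : 3 ≤ (Gd.neighborSet x).ncard := by rw [hNx]; omega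
      have : (Gd.neighborSet x).Nonempty := by
        rw [← Set.ncard_pos (Set.toFinite _)] at *
        omega
      obtain ⟨q, hq⟩ := this
      exact ⟨x, q, hq⟩
    have hmud : mu Gd < mu G := by
      refine Finset.sum_lt_sum ?_ ⟨x, Finset.mem_univ x, ?_⟩
      · intro w _
        by_cases h1 : w = x
        · rw [h1, hNx]; omega
        by_cases h2 : w = y
        · rw [h2, hNy]; omega
        · rw [hNw w h1 h2]
      · rw [hNx]; omega
    have hle : Gd ≤ G := by intro p q h; exact h.1
    exact minor_mono hle (IH (mu Gd) (hmu ▸ hmud) Gd rfl hdegd hEd)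
  · push_neg at hc1
    obtain ⟨x0, y0, hxy0⟩ := hE
    have hdx := deg_ge3 hdeg hxy0
    have hdy := deg_ge3 hdeg hxy0.symm
    obtain ⟨v, hv3⟩ : ∃ v, (G.neighborSet v).ncard = 3 := by
      by_cases h4 : 4 ≤ (G.neighborSet x0).ncard
      · have := hc1 x0 y0 hxy0 h4
        exact ⟨y0, by omega⟩
      · exact ⟨x0, by omega⟩
    obtain ⟨a, b, c, hab, hac, hbc, hN⟩ := Set.ncard_eq_three.mp hv3
    have IH' : ∀ G'' : SimpleGraph V, mu G'' < mu G →
        (∀ w, (G''.neighborSet w).ncard = 0 ∨ 3 ≤ (G''.neighborSet w).ncard) →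
        (∃ p q, G''.Adj p q) → IsMinorOf (completeGraph (Fin 4)) G'' :=
      fun G'' hlt h1 h2 => IH (mu G'') (hmu ▸ hlt) G'' rfl h1 h2
    have hva : G.Adj v a := by
      have : a ∈ G.neighborSet v := by rw [hN]; exact Set.mem_insert _ _
      exact this
    have hvb : G.Adj v b := by
      have : b ∈ G.neighborSet v := by
        rw [hN]; exact Set.mem_insert_of_mem _ (Set.mem_insert _ _)
      exact this
    have hvc : G.Adj v c := by
      have : c ∈ G.neighborSet v := by
        rw [hN]
        exact Set.mem_insert_of_mem _ (Set.mem_insert_of_mem _ rfl)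
      exact this
    by_cases h1 : G.Adj a b
    · by_cases h2 : G.Adj a c
      · by_cases h3 : G.Adj b c
        · exact K4_of_four G v a b c hva hvb hvc h1 h2 h3
        · refine hard_case G hdeg v b c a ?_ hbc (Ne.symm hab) (Ne.symm hac) h3 IH'
          rw [hN]
          ext z
          simp only [Set.mem_insert_iff, Set.mem_singleton_iff]
          tauto
      · refine hard_case G hdeg v a c b ?_ hac hab (Ne.symm hbc) h2 IH'
        rw [hN]
        ext z
        simp only [Set.mem_insert_iff, Set.mem_singleton_iff]
        tauto
    · exact hard_case G hdeg v a b c hN hab hac hbc h1 IH'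

end Aux11

namespace Aux11

variable {T : Type}

/-- attach a new leaf `none` to vertex `t₀`. -/
def addLeaf (τ : SimpleGraph T) (t₀ : T) : SimpleGraph (Option T) where
  Adj x y := (∃ s t, x = some s ∧ y = some t ∧ τ.Adj s t) ∨ (x = none ∧ y = some t₀) ∨
    (x = some t₀ ∧ y = none)
  symm := by
    constructor; rintro x y (⟨s, t, rfl, rfl, h⟩ | ⟨rfl, rfl⟩ | ⟨rfl, rfl⟩)
    · exact Or.inl ⟨t, s, rfl, rfl, h.symm⟩
    · exact Or.inr (Or.inr ⟨rfl, rfl⟩)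
    · exact Or.inr (Or.inl ⟨rfl, rfl⟩)
  loopless := by
    constructor; rintro x (⟨s, t, rfl, h2, h⟩ | ⟨rfl, h2⟩ | ⟨h1, h2⟩)
    · exact τ.irrefl (Option.some.inj h2 ▸ h)
    · exact nomatch h2
    · exact nomatch (h1.symm.trans h2)

lemma addLeaf_adj_some {τ : SimpleGraph T} {t₀ s t : T} :
    (addLeaf τ t₀).Adj (some s) (some t) ↔ τ.Adj s t := by
  constructor
  · rintro (⟨s', t', hs, ht, h⟩ | ⟨h, _⟩ | ⟨_, h⟩)
    · rwa [Option.some.inj hs, Option.some.inj ht]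
    · exact nomatch h
    · exact nomatch h
  · intro h
    exact Or.inl ⟨s, t, rfl, rfl, h⟩

lemma addLeaf_adj_none {τ : SimpleGraph T} {t₀ : T} {y : Option T} :
    (addLeaf τ t₀).Adj none y ↔ y = some t₀ := by
  constructor
  · rintro (⟨s', t', hs, _, _⟩ | ⟨_, h⟩ | ⟨h, _⟩)
    · exact nomatch hs
    · exact h
    · exact nomatch h
  · rintro rfl
    exact Or.inr (Or.inl ⟨rfl, rfl⟩)

lemma addLeaf_connected {τ : SimpleGraph T} {t₀ : T} (hτ : τ.Connected) :
    (addLeaf τ t₀).Connected := by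
  haveI : Nonempty (Option T) := ⟨none⟩
  have hsome : ∀ s : T, (addLeaf τ t₀).Reachable (some s) (some t₀) := fun s =>
    Reachable.map ⟨some, fun {x y} h => Or.inl ⟨x, y, rfl, rfl, h⟩⟩ (hτ.preconnected s t₀)
  have hn : (addLeaf τ t₀).Reachable none (some t₀) :=
    Adj.reachable (addLeaf_adj_none.mpr rfl)
  have hall : ∀ x, (addLeaf τ t₀).Reachable x (some t₀) := by
    rintro (_ | s)
    · exact hn
    · exact hsome s
  exact ⟨fun x y => (hall x).trans (hall y).symm⟩

lemma exists_last_edge {W : Type} {A : SimpleGraph W} :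
    ∀ {x w : W} (p : A.Walk x w), x ≠ w → ∃ z, A.Adj z w ∧ s(z, w) ∈ p.edges := by
  intro x w p
  induction p with
  | nil => intro h; exact absurd rfl h
  | @cons x' b w' h q ih =>
    intro _
    by_cases hbw : b = w'
    · subst hbw
      exact ⟨x', h, by simp⟩
    · obtain ⟨z, hz1, hz2⟩ := ih hbw
      exact ⟨z, hz1, by simp [hz2]⟩

lemma transfer_walk {τ : SimpleGraph T} {t₀ : T} :
    ∀ {x y : Option T} (p : (addLeaf τ t₀).Walk x y), none ∉ p.support →
      ∀ {x' y' : T}, x = some x' → y = some y' →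
      ∃ q : τ.Walk x' y', q.edges.map (Sym2.map some) = p.edges ∧
        q.support.map some = p.support := by
  intro x y p
  induction p with
  | nil =>
    intro _ x' y' hx hy
    subst hx
    obtain rfl := Option.some.inj hy
    exact ⟨Walk.nil, by simp, by simp⟩
  | @cons x b y h q ih =>
    intro hsup x' y' hx hy
    have hb : b ≠ none := by
      intro hbn
      subst hbn
      exact hsup (by
        rw [Walk.support_cons]
        exact List.mem_cons_of_mem _ q.start_mem_support)
    obtain ⟨b', rfl⟩ := Option.ne_none_iff_exists'.mp hb
    subst hx
    have hadj : τ.Adj x' b' := addLeaf_adj_some.mp h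
    have hsup' : none ∉ q.support := fun hn =>
      hsup (by rw [Walk.support_cons]; exact List.mem_cons_of_mem _ hn)
    obtain ⟨q', hq1, hq2⟩ := ih hsup' rfl hy
    exact ⟨Walk.cons hadj q', by simp [Walk.edges_cons, hq1],
      by simp [Walk.support_cons, hq2]⟩

lemma addLeaf_isTree {τ : SimpleGraph T} (hτ : τ.IsTree) (t₀ : T) :
    (addLeaf τ t₀).IsTree := by
  classical
  constructor
  · exact addLeaf_connected hτ.isConnected
  · intro x c hc
    by_cases hn : none ∈ c.support
    · have hc' : ((c.rotate none hn)).IsCycle := hc.rotate hn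
      cases h' : c.rotate none hn with
      | nil =>
        rw [h'] at hc'
        exact hc'.ne_nil rfl
      | @cons _ b _ h p =>
        rw [h'] at hc'
        have hb : b = some t₀ := addLeaf_adj_none.mp h
        subst hb
        obtain ⟨z, hz1, hz2⟩ := exists_last_edge p (by simp)
        have hz : z = some t₀ := by
          rcases hz1 with ⟨s', t', _, h2, _⟩ | ⟨_, h2⟩ | ⟨h1, _⟩
          · exact nomatch h2
          · exact nomatch h2
          · exact h1
        subst hz
        have hnd : (Walk.cons h p).edges.Nodup := hc'.edges_nodup
        rw [Walk.edges_cons] at hnd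
        have : s(some t₀, (none : Option T)) = s((none : Option T), some t₀) := Sym2.eq_swap
        rw [this] at hz2
        exact (List.nodup_cons.mp hnd).1 hz2
    · have hx : x ≠ none := fun h => hn (h ▸ c.start_mem_support)
      obtain ⟨x', rfl⟩ := Option.ne_none_iff_exists'.mp hx
      obtain ⟨q, hq1, hq2⟩ := transfer_walk c hn rfl rfl
      refine hτ.IsAcyclic q ?_
      rw [Walk.isCycle_def, Walk.isTrail_def]
      refine ⟨?_, ?_, ?_⟩
      · have hnd := hc.edges_nodup
        rw [← hq1] at hnd
        exact hnd.of_map _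
      · intro hqnil
        have h3 := hc.three_le_length
        have : c.edges = [] := by rw [← hq1, hqnil]; simp
        have hlen := c.length_edges
        rw [this] at hlen
        simp at hlen
        omega
      · have h3 := hc.2
        rw [← hq2, ← List.map_tail] at h3
        exact h3.of_map _

end Aux11

namespace Aux11

lemma build_decomp {V : Type} [Fintype V] (G : SimpleGraph V) (v : V)
    (hNc : (G.neighborSet v).ncard ≤ 2)
    {T : Type} {τ : SimpleGraph T} {Gs : SimpleGraph {x : V // x ≠ v}}
    {X : T → Set {x : V // x ≠ v}}
    (hGs : ∀ x y : {x : V // x ≠ v}, G.Adj x.1 y.1 → Gs.Adj x y)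
    (hD : IsTreeDecomp Gs τ X) (hsize : ∀ t, ((X t).ncard : ℤ) ≤ 2 + 1)
    (t₀ : T) (ht₀ : G.neighborSet v ⊆ Subtype.val '' X t₀) :
    TreewidthAtMost G 2 := by
  classical
  refine ⟨Option T, addLeaf τ t₀,
    fun o => match o with
      | none => insert v (G.neighborSet v)
      | some t => Subtype.val '' X t,
    ⟨addLeaf_isTree hD.isTree t₀, ?_, ?_, ?_⟩, ?_⟩
  · intro x
    by_cases hx : x = v
    · exact ⟨none, hx ▸ Set.mem_insert _ _⟩
    · obtain ⟨t, ht⟩ := hD.coverV ⟨x, hx⟩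
      exact ⟨some t, ⟨⟨x, hx⟩, ht, rfl⟩⟩
  · intro x y hxy
    by_cases hx : x = v
    · refine ⟨none, hx ▸ Set.mem_insert _ _, Set.mem_insert_of_mem _ ?_⟩
      rw [hx] at hxy
      exact hxy
    by_cases hy : y = v
    · refine ⟨none, Set.mem_insert_of_mem _ ?_, hy ▸ Set.mem_insert _ _⟩
      rw [hy] at hxy
      exact hxy.symm
    · obtain ⟨t, h1, h2⟩ := hD.coverE (hGs ⟨x, hx⟩ ⟨y, hy⟩ hxy)
      exact ⟨some t, ⟨⟨x, hx⟩, h1, rfl⟩, ⟨⟨y, hy⟩, h2, rfl⟩⟩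
  · intro x
    by_cases hx : x = v
    · have hset : {o : Option T | x ∈ (match o with
          | none => insert v (G.neighborSet v)
          | some t => Subtype.val '' X t)} = {(none : Option T)} := by
        ext o
        cases o with
        | none => simp [hx]
        | some t =>
          simp only [Set.mem_setOf_eq, Set.mem_singleton_iff]
          constructor
          · rintro ⟨z, _, hz2⟩
            exact absurd (hz2.trans hx) z.2
          · intro h
            exact nomatch h
      rw [hset]
      exact induce_singleton_connected _ _
    · have hxmem : ∀ t, x ∈ Subtype.val '' X t ↔ ⟨x, hx⟩ ∈ X t := by
        intro t
        constructor
        · rintro ⟨z, hz1, hz2⟩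
          have hzz : z = ⟨x, hx⟩ := Subtype.ext hz2
          rwa [hzz] at hz1
        · intro h
          exact ⟨⟨x, hx⟩, h, rfl⟩
      by_cases hxN : x ∈ G.neighborSet v
      · have hset : {o : Option T | x ∈ (match o with
            | none => insert v (G.neighborSet v)
            | some t => Subtype.val '' X t)} =
            insert none (Option.some '' {t | ⟨x, hx⟩ ∈ X t}) := by
          ext o
          cases o with
          | none => simp [hxN]
          | some t =>
            simp only [Set.mem_setOf_eq, Set.mem_insert_iff]
            rw [hxmem t]
            constructor
            · intro h
              exact Or.inr ⟨t, h, rfl⟩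
            · rintro (h | ⟨t', ht', hh⟩)
              · exact nomatch h
              · rwa [← Option.some.inj hh]
        rw [hset]
        have ht₀S : t₀ ∈ {t | ⟨x, hx⟩ ∈ X t} := (hxmem t₀).mp (ht₀ hxN)
        refine connected_induce_insert _ _ none (some t₀) ⟨t₀, ht₀S, rfl⟩
          (addLeaf_adj_none.mpr rfl) ?_
        exact connected_induce_map_some τ _ (fun p q h => Or.inl ⟨p, q, rfl, rfl, h⟩) _
          (hD.subtreeConn ⟨x, hx⟩)
      · have hset : {o : Option T | x ∈ (match o with
            | none => insert v (G.neighborSet v)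
            | some t => Subtype.val '' X t)} =
            Option.some '' {t | ⟨x, hx⟩ ∈ X t} := by
          ext o
          cases o with
          | none =>
            simp only [Set.mem_setOf_eq, Set.mem_insert_iff]
            constructor
            · rintro (h | h)
              · exact absurd h hx
              · exact absurd h hxN
            · rintro ⟨t', _, hh⟩
              exact nomatch hh
          | some t =>
            simp only [Set.mem_setOf_eq]
            rw [hxmem t]
            constructor
            · intro h
              exact ⟨t, h, rfl⟩
            · rintro ⟨t', ht', hh⟩
              rwa [← Option.some.inj hh]
        rw [hset]
        exact connected_induce_map_some τ _ (fun p q h => Or.inl ⟨p, q, rfl, rfl, h⟩) _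
          (hD.subtreeConn ⟨x, hx⟩)
  · intro o
    cases o with
    | none =>
      have h1 := Set.ncard_insert_le v (G.neighborSet v)
      have h2 : (insert v (G.neighborSet v)).ncard ≤ 3 := by omega
      exact_mod_cast h2
    | some t =>
      show ((Subtype.val '' X t).ncard : ℤ) ≤ 2 + 1
      rw [Set.ncard_image_of_injective _ Subtype.val_injective]
      exact hsize t

lemma main_aux : ∀ (n : ℕ) (V : Type) [Fintype V] (G : SimpleGraph V),
    Nat.card V = n → ¬ IsMinorOf (completeGraph (Fin 4)) G → TreewidthAtMost G 2 := by
  intro n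
  induction n using Nat.strong_induction_on with
  | _ n IH =>
  intro V _ G hn hK4
  classical
  by_cases hV : IsEmpty V
  · refine ⟨Unit, ⊥, fun _ => ∅, ⟨⟨?_, SimpleGraph.isAcyclic_bot⟩, ?_, ?_, ?_⟩, ?_⟩
    · exact ⟨fun a b => Subsingleton.elim a b ▸ Reachable.refl a⟩
    · intro x
      exact (hV.false x).elim
    · intro x y h
      exact (hV.false x).elim
    · intro x
      exact (hV.false x).elim
    · intro t
      simp
  · rw [not_isEmpty_iff] at hV
    have hvex : ∃ v : V, (G.neighborSet v).ncard ≤ 2 := by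
      by_contra hco
      push_neg at hco
      have hdeg : ∀ w, (G.neighborSet w).ncard = 0 ∨ 3 ≤ (G.neighborSet w).ncard :=
        fun w => Or.inr (by have := hco w; omega)
    -- edge exists
      have hE : ∃ x y, G.Adj x y := by
        obtain ⟨v0⟩ := hV
        have hpos : 0 < (G.neighborSet v0).ncard := by have := hco v0; omega
        obtain ⟨y, hy⟩ := (Set.ncard_pos (Set.toFinite _)).mp hpos
        exact ⟨v0, y, hy⟩
      exact hK4 (lemA (mu G) G rfl hdeg hE)
    obtain ⟨v, hv⟩ := hvex
    set N := G.neighborSet v with hNdef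
    set G' : SimpleGraph V :=
      { Adj := fun x y => (G.Adj x y ∧ x ≠ v ∧ y ≠ v) ∨ (x ∈ N ∧ y ∈ N ∧ x ≠ y)
        symm := by
          constructor; rintro x y (⟨h1, h2, h3⟩ | ⟨h1, h2, h3⟩)
          · exact Or.inl ⟨h1.symm, h3, h2⟩
          · exact Or.inr ⟨h2, h1, h3.symm⟩
        loopless := by
          constructor; rintro x (⟨h1, _, _⟩ | ⟨_, _, h3⟩)
          · exact G.irrefl h1
          · exact h3 rfl } with hG'
    have hG'adj : ∀ x y, G'.Adj x y ↔
        ((G.Adj x y ∧ x ≠ v ∧ y ≠ v) ∨ (x ∈ N ∧ y ∈ N ∧ x ≠ y)) := fun x y => Iff.rfl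
    set emb : {x : V // x ≠ v} ↪ V := Function.Embedding.subtype _ with hemb
    set Gs : SimpleGraph {x : V // x ≠ v} := G'.comap emb with hGs0
    have hKs : ¬ IsMinorOf (completeGraph (Fin 4)) Gs := by
      intro hm
      have hm' := minor_comap G' emb hm
      rcases Set.eq_empty_or_nonempty N with hNe | ⟨u, hu⟩
      · refine hK4 (minor_mono ?_ hm')
        intro x y h
        rcases (hG'adj x y).mp h with ⟨h1, _, _⟩ | ⟨h1, _, _⟩
        · exact h1
        · rw [hNe] at h1
          exact absurd h1 (Set.notMem_empty x)
      · have key : ∀ x y : V, x ∈ N → y ∈ N → x ≠ y → x = u ∨ y = u := by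
          intro x y hx hy hxy
          by_contra hcon
          push_neg at hcon
          have hsub : ({u, x, y} : Set V) ⊆ N := by
            intro z hz
            simp only [Set.mem_insert_iff, Set.mem_singleton_iff] at hz
            rcases hz with hz | hz | hz <;> rw [hz]
            · exact hu
            · exact hx
            · exact hy
          have h3 : ({u, x, y} : Set V).ncard = 3 := by
            rw [Set.ncard_insert_of_notMem
              (by simp [Ne.symm hcon.1, Ne.symm hcon.2]) (Set.toFinite _),
              Set.ncard_pair hxy]
          have hle := Set.ncard_le_ncard hsub (Set.toFinite _)
          omega
        refine hK4 (lift_minor G G' v u hu ?_ ?_ hm')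
        · intro y hy
          rcases (hG'adj v y).mp hy with ⟨_, h2, _⟩ | ⟨h1, _, _⟩
          · exact h2 rfl
          · exact G.irrefl h1
        · intro x y hxy
          rcases (hG'adj x y).mp hxy with ⟨h1, _, _⟩ | ⟨h1, h2, h3⟩
          · exact Or.inl h1
          · rcases key x y h1 h2 h3 with rfl | rfl
            · exact Or.inr (Or.inl ⟨rfl, h2⟩)
            · exact Or.inr (Or.inr ⟨rfl, h1⟩)
    have hcard : Nat.card {x : V // x ≠ v} + 1 = Nat.card V := by
      have e : {x : V // x ≠ v} ≃ ({v}ᶜ : Set V) :=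
        Equiv.subtypeEquivRight (by intro x; simp)
      rw [Nat.card_congr e, Nat.card_coe_set_eq, Set.compl_eq_univ_diff,
        Set.ncard_diff_singleton_add_one (Set.mem_univ v) (Set.toFinite _),
        Set.ncard_univ]
    have hpos : 0 < Nat.card V := Nat.card_pos
    obtain ⟨Ty, τ, X, hD, hsize⟩ :=
      IH (Nat.card {x : V // x ≠ v}) (by omega) {x : V // x ≠ v} Gs rfl hKs
    have hGsadj : ∀ x y : {x : V // x ≠ v}, G.Adj x.1 y.1 → Gs.Adj x y := by
      intro x y h
      exact Or.inl ⟨h, x.2, y.2⟩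
    have ht₀ex : ∃ t₀, N ⊆ Subtype.val '' X t₀ := by
      rcases Set.eq_empty_or_nonempty N with hNe | ⟨u, hu⟩
      · obtain ⟨t⟩ := hD.isTree.isConnected.nonempty
        exact ⟨t, by rw [hNe]; exact Set.empty_subset _⟩
      · have hune : u ≠ v := (G.ne_of_adj hu).symm
        by_cases h1 : N = {u}
        · obtain ⟨t₀, ht⟩ := hD.coverV ⟨u, hune⟩
          refine ⟨t₀, ?_⟩
          rw [h1]
          exact Set.singleton_subset_iff.mpr ⟨⟨u, hune⟩, ht, rfl⟩
        · obtain ⟨w, hw, hwu⟩ : ∃ w ∈ N, w ≠ u := by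
            by_contra hcon
            push_neg at hcon
            exact h1 (Set.eq_singleton_iff_unique_mem.mpr ⟨hu, hcon⟩)
          have hwne : w ≠ v := (G.ne_of_adj hw).symm
          have hGsuw : Gs.Adj ⟨u, hune⟩ ⟨w, hwne⟩ :=
            Or.inr ⟨hu, hw, hwu.symm⟩
          obtain ⟨t₀, h1', h2'⟩ := hD.coverE hGsuw
          have hNuw : N = {u, w} := by
            have hsub : ({u, w} : Set V) ⊆ N := by
              intro z hz
              simp only [Set.mem_insert_iff, Set.mem_singleton_iff] at hz
              rcases hz with hz | hz <;> rw [hz]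
              · exact hu
              · exact hw
            refine (Set.eq_of_subset_of_ncard_le hsub ?_ (Set.toFinite _)).symm
            rw [Set.ncard_pair hwu.symm]
            exact hv
          refine ⟨t₀, ?_⟩
          rw [hNuw]
          intro z hz
          simp only [Set.mem_insert_iff, Set.mem_singleton_iff] at hz
          rcases hz with hz | hz <;> rw [hz]
          · exact ⟨⟨u, hune⟩, h1', rfl⟩
          · exact ⟨⟨w, hwne⟩, h2', rfl⟩
    obtain ⟨t₀, ht₀⟩ := ht₀ex
    exact build_decomp G v hv hGsadj hD hsize t₀ ht₀

end Aux11

/-- every graph with no `K₄` minor has tree-width at most 2. -/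
theorem stmt11 {V : Type} [Fintype V] (G : SimpleGraph V)
    (h : ¬ IsMinorOf (completeGraph (Fin 4)) G) :
    TreewidthAtMost G 2 :=
  Aux11.main_aux (Nat.card V) V G rfl h
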